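/- Let k be a field, p a positive integer, V a finite-dimensional k-vector space, and x a k-linear endomorphism of V with x^p = 0. Then, as integers modulo p, dim_k V ≡ Σ_{i=1}^{p-1} i · dim_k φ_i(V,x) (mod p). -/

import Mathlib

open LinearMap Module Submodule Finset

/-- The `i`-th component of the semisimplification functor: for a `k`-vector space `V`
with endomorphism `x`, `φ_i(V,x) := (ker x ⊓ range x^(i-1)) ⧸ (ker x ⊓ range x^i)`. -/
abbrev phi {k V : Type*} [Field k] [AddCommGroup V] [Module k V]
    (x : V →ₗ[k] V) (i : ℕ) :=
  ↥(LinearMap.ker x ⊓ LinearMap.range (x ^ (i - 1))) ⧸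
    ((LinearMap.ker x ⊓ LinearMap.range (x ^ i)).comap
      (LinearMap.ker x ⊓ LinearMap.range (x ^ (i - 1))).subtype)

/-- `dim_k V ≡ Σ_{i=1}^{p-1} i · dim_k φ_i(V,x) (mod p)`. -/
theorem stmt4 (k : Type*) [Field k] (p : ℕ) (hp : 0 < p)
    (V : Type*) [AddCommGroup V] [Module k V] [FiniteDimensional k V]
    (x : V →ₗ[k] V) (hx : x ^ p = 0) :
    Module.finrank k V ≡
      ∑ i ∈ Finset.Icc 1 (p - 1), i * Module.finrank k (phi x i) [MOD p] := by
  classical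
  -- Lemma A: rank-nullity for x restricted to range (x^i):
  -- dim (ker x ⊓ range x^i) + dim (range x^(i+1)) = dim (range x^i)
  have hA : ∀ i : ℕ, finrank k ↥(ker x ⊓ range (x ^ i)) + finrank k ↥(range (x ^ (i+1))) =
      finrank k ↥(range (x ^ i)) := by
    intro i
    have h1 : range (x ^ (i+1)) = Submodule.map x (range (x ^ i)) := by
      rw [pow_succ', Module.End.mul_eq_comp, range_comp]
    have h2 := LinearMap.finrank_range_add_finrank_ker (x.domRestrict (range (x ^ i)))
    rw [LinearMap.range_domRestrict, LinearMap.ker_domRestrict] at h2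
    have h3 : finrank k ↥(Submodule.comap (range (x^i)).subtype (ker x)) =
        finrank k ↥(ker x ⊓ range (x ^ i)) := by
      rw [← Submodule.finrank_map_subtype_eq, Submodule.map_comap_subtype, inf_comm]
    rw [h3] at h2
    rw [h1]
    omega
  -- Lemma B: dim (phi x (j+1)) + dim (ker x ⊓ range x^(j+1)) = dim (ker x ⊓ range x^j)
  have hB : ∀ j : ℕ, finrank k (phi x (j+1)) + finrank k ↥(ker x ⊓ range (x ^ (j+1))) =
      finrank k ↥(ker x ⊓ range (x ^ j)) := by
    intro j
    have hle : ker x ⊓ range (x ^ (j+1)) ≤ ker x ⊓ range (x ^ j) := by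
      refine inf_le_inf_left _ ?_
      rw [pow_succ, Module.End.mul_eq_comp]
      exact range_comp_le_range _ _
    have h4 := Submodule.finrank_quotient_add_finrank
      ((ker x ⊓ range (x ^ (j+1))).comap (ker x ⊓ range (x ^ ((j+1) - 1))).subtype)
    have h5 : finrank k
        ↥((ker x ⊓ range (x ^ (j+1))).comap (ker x ⊓ range (x ^ ((j+1) - 1))).subtype) =
        finrank k ↥(ker x ⊓ range (x ^ (j+1))) := by
      rw [← Submodule.finrank_map_subtype_eq, Submodule.map_comap_subtype,
        Nat.add_sub_cancel, inf_eq_right.mpr hle]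
    rw [h5] at h4
    rw [Nat.add_sub_cancel] at h4
    exact h4
  set d : ℕ → ℕ := fun i => finrank k ↥(ker x ⊓ range (x ^ i)) with hd
  set r : ℕ → ℕ := fun i => finrank k ↥(range (x ^ i)) with hr
  set D : ℕ → ℤ := fun i => (d i : ℤ) with hD
  set R : ℕ → ℤ := fun i => (r i : ℤ) with hR
  have hA' : ∀ i, D i = R i - R (i + 1) := by
    intro i; have := hA i; simp only [hD, hR, hd, hr] at *; omega
  have hB' : ∀ j : ℕ, (finrank k (phi x (j+1)) : ℤ) = D j - D (j+1) := by
    intro j; have := hB j; simp only [hD, hd] at *; omega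
  -- Abel-summation / telescoping identity
  have tele : ∀ m : ℕ, ∑ j ∈ range m, ((j : ℤ) + 1) * (D j - D (j+1)) =
      (∑ j ∈ range m, D j) - m * D m := by
    intro m
    induction m with
    | zero => simp
    | succ n ih =>
      rw [Finset.sum_range_succ, ih, Finset.sum_range_succ]
      push_cast
      ring
  have hsum : ∑ j ∈ range (p-1), D j = R 0 - R (p-1) := by
    have := Finset.sum_range_sub' R (p-1)
    rw [← this]
    exact Finset.sum_congr rfl fun j _ => (hA' j)
  have hR0 : R 0 = (finrank k V : ℤ) := by
    simp only [hR, hr]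
    norm_cast
    rw [pow_zero, Module.End.one_eq_id, LinearMap.range_id, finrank_top]
  have hRp : R p = 0 := by
    simp only [hR, hr]
    norm_cast
    rw [hx, LinearMap.range_zero, finrank_bot]
  rw [Nat.modEq_iff_dvd]
  have hcast : ((∑ i ∈ Finset.Icc 1 (p - 1), i * finrank k (phi x i) : ℕ) : ℤ) =
      ∑ j ∈ range (p-1), ((j : ℤ) + 1) * (D j - D (j+1)) := by
    push_cast
    rw [show Finset.Icc 1 (p-1) = Finset.Ico 1 p by
        rw [← Finset.Ico_add_one_right_eq_Icc]; congr 1; omega,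
      Finset.sum_Ico_eq_sum_range]
    refine Finset.sum_congr rfl fun j _ => ?_
    rw [show 1 + j = j + 1 by ring, hB' j]
    push_cast
    ring
  rw [hcast, tele, hsum, hR0]
  have hDp : D (p-1) = R (p-1) := by
    have := hA' (p-1)
    rwa [show p - 1 + 1 = p by omega, hRp, sub_zero] at this
  refine ⟨-R (p-1), ?_⟩
  rw [hDp]
  have hpc : ((p - 1 : ℕ) : ℤ) = (p : ℤ) - 1 := by omega
  rw [hpc]
  ring
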